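/- Let A ∈ ℝ^{n×n} be such that every eigenvalue λ ∈ ℂ of A (i.e., of its complexification) satisfies |λ| < 1, let B ∈ ℝ^{n×m}, and let w be a random vector in ℝ^m with square-integrable coordinates, E[w] = 0, and finite covariance matrix Σ_w = E[w wᵀ]. Then there exist a symmetric positive definite matrix Q ∈ ℝ^{n×n} and a radius R ≥ 0 such that for every x ∈ ℝⁿ with ‖x‖ > R: E[(Ax + Bw)ᵀ Q (Ax + Bw)] ≤ xᵀ Q x. -/

import Mathlib

set_option maxHeartbeats 1000000

open Matrix MeasureTheory

section Aux

attribute [local instance] Matrix.linftyOpNormedRing Matrix.linftyOpNormedAlgebra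

private lemma sldq_aux_complete (n : ℕ) : CompleteSpace (Matrix (Fin n) (Fin n) ℂ) :=
  inferInstanceAs (CompleteSpace (Fin n → Fin n → ℂ))

attribute [local instance] sldq_aux_complete

private lemma sldq_aux_entry_le {n : ℕ} (M : Matrix (Fin n) (Fin n) ℂ) (i j : Fin n) :
    ‖M i j‖ ≤ ‖M‖ := by
  have h1 : ‖M i j‖₊ ≤ ‖M‖₊ := by
    rw [Matrix.linfty_opNNNorm_def]
    exact le_trans (Finset.single_le_sum (f := fun j' => ‖M i j'‖₊)
      (fun _ _ => zero_le) (Finset.mem_univ j))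
      (Finset.le_sup (f := fun i => ∑ j, ‖M i j‖₊) (Finset.mem_univ i))
  exact_mod_cast h1

private lemma sldq_aux_specrad {n : ℕ} (A : Matrix (Fin n) (Fin n) ℝ)
    (hA : ∀ lam : ℂ,
      Module.End.HasEigenvalue (Matrix.toLin' (A.map (Complex.ofReal))) lam → ‖lam‖ < 1) :
    spectralRadius ℂ (A.map (Complex.ofReal)) < 1 := by
  set Ac := A.map (Complex.ofReal) with hAc
  have hspec : ∀ z ∈ spectrum ℂ Ac, ‖z‖₊ < 1 := by
    intro z hz
    have : Module.End.HasEigenvalue (Matrix.toLin' Ac) z := by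
      rw [← Matrix.toLin_eq_toLin']
      rw [← AlgEquiv.spectrum_eq (Matrix.toLinAlgEquiv <| Pi.basisFun ℂ (Fin n))] at hz
      exact Module.End.hasEigenvalue_iff_mem_spectrum.mpr hz
    have := hA z this
    exact_mod_cast this
  rcases Set.eq_empty_or_nonempty (spectrum ℂ Ac) with h | h
  · rw [spectralRadius, h]
    simp
  · exact_mod_cast spectrum.spectralRadius_lt_of_forall_lt_of_nonempty h hspec

private lemma sldq_aux_geom {n : ℕ} (A : Matrix (Fin n) (Fin n) ℝ)
    (hA : ∀ lam : ℂ,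
      Module.End.HasEigenvalue (Matrix.toLin' (A.map (Complex.ofReal))) lam → ‖lam‖ < 1) :
    ∃ C s : ℝ, 1 ≤ C ∧ 0 < s ∧ s < 1 ∧ ∀ (k : ℕ) i j, |(A ^ k) i j| ≤ C * s ^ k := by
  set Ac := A.map (Complex.ofReal) with hAc
  have hρ := sldq_aux_specrad A hA
  obtain ⟨r, hr1, hr2⟩ := ENNReal.lt_iff_exists_nnreal_btwn.mp hρ
  have hr3 : (r : ℝ) < 1 := by exact_mod_cast hr2
  have hGel := spectrum.pow_nnnorm_pow_one_div_tendsto_nhds_spectralRadius Ac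
  have h_ev : ∀ᶠ k : ℕ in Filter.atTop, (‖Ac ^ k‖₊ : ENNReal) ^ (1 / (k:ℝ)) < r :=
    hGel.eventually_lt_const hr1
  obtain ⟨N, hN⟩ := Filter.eventually_atTop.mp h_ev
  set K := max N 1 with hK
  set s : ℝ := max (r : ℝ) (1/2) with hs
  have hs0 : 0 < s := lt_of_lt_of_le (by norm_num) (le_max_right _ _)
  have hs1 : s < 1 := max_lt hr3 (by norm_num)
  have hbig : ∀ k, K ≤ k → ‖Ac ^ k‖ ≤ s ^ k := by
    intro k hk
    have hk1 : 1 ≤ k := le_trans (le_max_right _ _) hk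
    have hk0 : (k : ℝ) ≠ 0 := by positivity
    have h2 := hN k (le_trans (le_max_left _ _) hk)
    have hx : ((‖Ac ^ k‖₊ : ENNReal) ^ (1/(k:ℝ))) ^ (k:ℝ) = (‖Ac ^ k‖₊ : ENNReal) := by
      rw [← ENNReal.rpow_mul, one_div, inv_mul_cancel₀ hk0, ENNReal.rpow_one]
    have h3 : (‖Ac ^ k‖₊ : ENNReal) < (r : ENNReal) ^ (k : ℝ) := by
      rw [← hx]; exact ENNReal.rpow_lt_rpow h2 (by positivity)
    rw [← ENNReal.coe_rpow_of_nonneg _ (by positivity : (0:ℝ) ≤ (k:ℝ)),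
      ENNReal.coe_lt_coe] at h3
    have h4 : ‖Ac ^ k‖ ≤ (r : ℝ) ^ k := by
      have h5 : (‖Ac ^ k‖₊ : ℝ) ≤ ((r ^ ((k:ℕ):ℝ) : NNReal) : ℝ) := by exact_mod_cast h3.le
      rwa [coe_nnnorm, NNReal.coe_rpow, Real.rpow_natCast] at h5
    exact le_trans h4 (pow_le_pow_left₀ (by positivity) (le_max_left _ _) k)
  set C : ℝ := (∑ i ∈ Finset.range K, ‖Ac ^ i‖ / s ^ i) + 1 with hC
  have hC1 : 1 ≤ C := by
    have h6 : 0 ≤ ∑ i ∈ Finset.range K, ‖Ac ^ i‖ / s ^ i :=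
      Finset.sum_nonneg fun i _ => div_nonneg (norm_nonneg _) (by positivity)
    rw [hC]; linarith
  have hnorm : ∀ k, ‖Ac ^ k‖ ≤ C * s ^ k := by
    intro k
    rcases le_or_gt K k with h | h
    · exact le_trans (hbig k h) (le_mul_of_one_le_left (by positivity) hC1)
    · have hsum : ‖Ac ^ k‖ / s ^ k ≤ C := by
        rw [hC]
        have h7 := Finset.single_le_sum (f := fun i => ‖Ac ^ i‖ / s ^ i)
          (fun i _ => div_nonneg (norm_nonneg _) (by positivity)) (Finset.mem_range.mpr h)
        linarith
      calc ‖Ac ^ k‖ = ‖Ac ^ k‖ / s ^ k * s ^ k := by field_simp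
        _ ≤ C * s ^ k := mul_le_mul_of_nonneg_right hsum (by positivity)
  have hpow : ∀ k : ℕ, Ac ^ k = (A ^ k).map Complex.ofReal := by
    intro k
    induction k with
    | zero => ext i j; by_cases h : i = j <;>
        simp [Matrix.map_apply, Matrix.one_apply, h]
    | succ k ih => ext i j; rw [pow_succ, ih]; simp [pow_succ, Matrix.mul_apply, Matrix.map_apply, hAc]
  refine ⟨C, s, hC1, hs0, hs1, fun k i j => ?_⟩
  have h5 : ‖(Ac ^ k) i j‖ ≤ ‖Ac ^ k‖ := sldq_aux_entry_le _ i j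
  have h6 := hnorm k
  rw [hpow k] at h5 h6
  simpa [Matrix.map_apply] using le_trans h5 h6

end Aux

private lemma sldq_aux_expand {ι κ : Type*} [Fintype ι] [Fintype κ]
    (M : Matrix ι κ ℝ) (x : ι → ℝ) (y : κ → ℝ) :
    x ⬝ᵥ M.mulVec y = ∑ i, ∑ j, x i * (M i j * y j) := by
  simp [dotProduct, Matrix.mulVec, Finset.mul_sum]

private lemma sldq_aux_conj {ι κ : Type*} [Fintype ι] [Fintype κ]
    (M : Matrix ι ι ℝ) (N : Matrix ι κ ℝ) (x y : κ → ℝ) :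
    x ⬝ᵥ (Nᵀ * M * N).mulVec y = (N.mulVec x) ⬝ᵥ M.mulVec (N.mulVec y) := by
  rw [← Matrix.mulVec_mulVec, ← Matrix.mulVec_mulVec, Matrix.dotProduct_mulVec,
    Matrix.vecMul_transpose]

private lemma sldq_aux_selfconj {ι κ : Type*} [Fintype ι] [Fintype κ]
    (N : Matrix ι κ ℝ) (x y : κ → ℝ) :
    x ⬝ᵥ (Nᵀ * N).mulVec y = (N.mulVec x) ⬝ᵥ (N.mulVec y) := by
  rw [← Matrix.mulVec_mulVec, Matrix.dotProduct_mulVec, Matrix.vecMul_transpose]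

/-- A strictly stable linear stochastic system `x⁺ = Ax + Bw` (all complex eigenvalues of
`A` of modulus `< 1`, `w` zero-mean square-integrable with covariance `Sw`) admits a
quadratic drift function `V(x) = xᵀQx` satisfying the drift criterion V1 outside a ball:
`E[V(Ax+Bw)] ≤ V(x)` for all `‖x‖ > R`. -/
theorem stable_linear_quadratic_drift {n m : ℕ} (A : Matrix (Fin n) (Fin n) ℝ)
    (hA : ∀ lam : ℂ,
      Module.End.HasEigenvalue (Matrix.toLin' (A.map (Complex.ofReal))) lam → ‖lam‖ < 1)
    (B : Matrix (Fin n) (Fin m) ℝ)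
    {Ω : Type*} [MeasurableSpace Ω] (μ : Measure Ω) [IsProbabilityMeasure μ]
    (w : Ω → Fin m → ℝ) (hmeas : Measurable w)
    (hL2 : ∀ i, MemLp (fun ω => w ω i) 2 μ)
    (hmean : ∀ i, ∫ ω, w ω i ∂μ = 0)
    (Sw : Matrix (Fin m) (Fin m) ℝ)
    (hcov : ∀ i j, ∫ ω, w ω i * w ω j ∂μ = Sw i j) :
    ∃ (Q : Matrix (Fin n) (Fin n) ℝ) (R : ℝ), Q.PosDef ∧ 0 ≤ R ∧
      ∀ x : Fin n → ℝ, R < Real.sqrt (x ⬝ᵥ x) →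
        ∫ ω, (A.mulVec x + B.mulVec (w ω)) ⬝ᵥ Q.mulVec (A.mulVec x + B.mulVec (w ω)) ∂μ ≤
          x ⬝ᵥ Q.mulVec x := by
  classical
  obtain ⟨C, s, hC1, hs0, hs1, hbound⟩ := sldq_aux_geom A hA
  set S : ℕ → Matrix (Fin n) (Fin n) ℝ := fun k => (A ^ k)ᵀ * (A ^ k) with hSdef
  -- entrywise summability
  have hgeom : Summable (fun k : ℕ => ((n : ℝ) * C ^ 2) * (s ^ 2) ^ k) :=
    (summable_geometric_of_lt_one (by positivity) (by nlinarith)).mul_left _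
  have hSle : ∀ (k : ℕ) i j, |S k i j| ≤ ((n : ℝ) * C ^ 2) * (s ^ 2) ^ k := by
    intro k i j
    have h1 : S k i j = ∑ l, (A ^ k) l i * (A ^ k) l j := by
      rw [hSdef]
      simp only [Matrix.mul_apply, Matrix.transpose_apply]
    rw [h1]
    refine le_trans (Finset.abs_sum_le_sum_abs _ _) ?_
    have h2 : ∀ l : Fin n, |(A ^ k) l i * (A ^ k) l j| ≤ (C * s ^ k) ^ 2 := by
      intro l
      rw [abs_mul]
      have hb1 := hbound k l i
      have hb2 := hbound k l j
      have h3 : (0:ℝ) ≤ |(A ^ k) l i| := abs_nonneg _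
      have h4 : (0:ℝ) ≤ |(A ^ k) l j| := abs_nonneg _
      nlinarith
    refine le_trans (Finset.sum_le_sum fun l _ => h2 l) ?_
    rw [Finset.sum_const, Finset.card_univ, Fintype.card_fin, nsmul_eq_mul]
    have h5 : (C * s ^ k) ^ 2 = C ^ 2 * (s ^ 2) ^ k := by ring
    rw [h5]
    ring_nf
    exact le_refl _
  have hSsum : ∀ i j, Summable (fun k => S k i j) := fun i j =>
    Summable.of_abs
      (Summable.of_nonneg_of_le (fun k => abs_nonneg _) (fun k => hSle k i j) hgeom)
  set Q : Matrix (Fin n) (Fin n) ℝ := Matrix.of (fun i j => ∑' k, S k i j) with hQdef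
  have hQapp : ∀ i j, Q i j = ∑' k, S k i j := fun i j => rfl
  have hterm_summable : ∀ (x y : Fin n → ℝ) i j,
      Summable (fun k => x i * (S k i j * y j)) :=
    fun x y i j => ((hSsum i j).mul_right _).mul_left _
  have hqf_summable : ∀ x y : Fin n → ℝ,
      Summable (fun k => x ⬝ᵥ (S k).mulVec y) := by
    intro x y
    have h0 : (fun k => x ⬝ᵥ (S k).mulVec y)
        = fun k => ∑ i, ∑ j, x i * (S k i j * y j) := by
      funext k; exact sldq_aux_expand (S k) x y
    rw [h0]
    exact summable_sum fun i _ => summable_sum fun j _ => hterm_summable x y i j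
  have hqf : ∀ x y : Fin n → ℝ, x ⬝ᵥ Q.mulVec y = ∑' k, x ⬝ᵥ (S k).mulVec y := by
    intro x y
    rw [sldq_aux_expand Q x y]
    have h1 : ∀ i j, x i * (Q i j * y j) = ∑' k, x i * (S k i j * y j) := by
      intro i j
      rw [hQapp, ← tsum_mul_right, ← tsum_mul_left]
    have h2 : ∑ i, ∑ j, x i * (Q i j * y j)
        = ∑ i, ∑ j, ∑' k, x i * (S k i j * y j) :=
      Finset.sum_congr rfl fun i _ => Finset.sum_congr rfl fun j _ => h1 i j
    rw [h2]
    have h3 : ∀ i : Fin n, ∑ j, ∑' k, x i * (S k i j * y j)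
        = ∑' k, ∑ j, x i * (S k i j * y j) := fun i =>
      (Summable.tsum_finsetSum fun j _ => hterm_summable x y i j).symm
    rw [Finset.sum_congr rfl fun i _ => h3 i,
      ← Summable.tsum_finsetSum fun i _ => summable_sum fun j _ => hterm_summable x y i j]
    exact tsum_congr fun k => (sldq_aux_expand (S k) x y).symm
  have hS0 : ∀ x : Fin n → ℝ, x ⬝ᵥ (S 0).mulVec x = x ⬝ᵥ x := by
    intro x
    simp [hSdef, Matrix.one_mulVec]
  have hSconj : ∀ (k : ℕ) (x y : Fin n → ℝ),
      (A.mulVec x) ⬝ᵥ (S k).mulVec (A.mulVec y) = x ⬝ᵥ (S (k+1)).mulVec y := by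
    intro k x y
    have h1 : S (k+1) = Aᵀ * (S k) * A := by
      rw [hSdef]
      simp only [pow_succ, Matrix.transpose_mul]
      noncomm_ring
    rw [h1, sldq_aux_conj (S k) A x y]
  have hSnonneg : ∀ (k : ℕ) (x : Fin n → ℝ), 0 ≤ x ⬝ᵥ (S k).mulVec x := by
    intro k x
    have h1 : x ⬝ᵥ (S k).mulVec x = ((A ^ k).mulVec x) ⬝ᵥ ((A ^ k).mulVec x) := by
      rw [hSdef]
      exact sldq_aux_selfconj (A ^ k) x x
    rw [h1, dotProduct]
    exact Finset.sum_nonneg fun l _ => mul_self_nonneg _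
  have hSsymm : ∀ (k : ℕ) i j, S k i j = S k j i := by
    intro k i j
    rw [hSdef]
    simp only [Matrix.mul_apply, Matrix.transpose_apply]
    exact Finset.sum_congr rfl fun l _ => mul_comm _ _
  have hherm : Q.IsHermitian := by
    refine Matrix.IsHermitian.ext fun i j => ?_
    simp only [RCLike.star_def]
    rw [starRingEnd_apply, star_trivial, hQapp, hQapp]
    exact tsum_congr fun k => hSsymm k j i
  have hdotpos : ∀ x : Fin n → ℝ, x ≠ 0 → 0 < x ⬝ᵥ x := by
    intro x hx
    have h1 : x ⬝ᵥ x ≠ 0 := fun h => hx (dotProduct_self_eq_zero.mp h)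
    have h2 : 0 ≤ x ⬝ᵥ x := Finset.sum_nonneg fun l _ => mul_self_nonneg _
    exact lt_of_le_of_ne h2 (Ne.symm h1)
  have hposdef : Q.PosDef := by
    refine Matrix.PosDef.of_dotProduct_mulVec_pos hherm fun x hx => ?_
    rw [star_trivial]
    rw [hqf x x]
    calc (0:ℝ) < x ⬝ᵥ x := hdotpos x hx
      _ = x ⬝ᵥ (S 0).mulVec x := (hS0 x).symm
      _ ≤ ∑' k, x ⬝ᵥ (S k).mulVec x :=
          Summable.le_tsum (hqf_summable x x) 0 fun k _ => hSnonneg k x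
  have hLyap : ∀ x : Fin n → ℝ,
      (A.mulVec x) ⬝ᵥ Q.mulVec (A.mulVec x) = x ⬝ᵥ Q.mulVec x - x ⬝ᵥ x := by
    intro x
    rw [hqf, hqf x x]
    have h1 : (fun k => (A.mulVec x) ⬝ᵥ (S k).mulVec (A.mulVec x))
        = fun k => x ⬝ᵥ (S (k+1)).mulVec x := funext fun k => hSconj k x x
    rw [h1]
    have h2 := Summable.tsum_eq_zero_add (hqf_summable x x)
    rw [hS0] at h2
    linarith
  -- probabilistic helpers
  have hwmeas : ∀ p, Measurable fun ω => w ω p := fun p => (measurable_pi_apply p).comp hmeas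
  have hwi : ∀ p, Integrable (fun ω => w ω p) μ := fun p => (hL2 p).integrable one_le_two
  have hprod : ∀ p q, Integrable (fun ω => w ω p * w ω q) μ := by
    intro p q
    have h1 := (hL2 p).integrable_sq
    have h2 := (hL2 q).integrable_sq
    refine ((h1.add h2).const_mul (1/2)).mono' ?_ ?_
    · exact ((hwmeas p).mul (hwmeas q)).aestronglyMeasurable
    · filter_upwards with ω
      rw [Real.norm_eq_abs, abs_mul]
      simp only [Pi.add_apply]
      nlinarith [sq_nonneg (|w ω p| - |w ω q|), sq_abs (w ω p), sq_abs (w ω q),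
        abs_nonneg (w ω p), abs_nonneg (w ω q)]
  have hlinI : ∀ v : Fin m → ℝ, Integrable (fun ω => v ⬝ᵥ w ω) μ := by
    intro v
    have h1 : (fun ω => v ⬝ᵥ w ω) = fun ω => ∑ p, v p * w ω p := by
      funext ω; simp [dotProduct]
    rw [h1]
    exact integrable_finset_sum _ fun p _ => (hwi p).const_mul (v p)
  have hlin0 : ∀ v : Fin m → ℝ, ∫ ω, v ⬝ᵥ w ω ∂μ = 0 := by
    intro v
    have h1 : (fun ω => v ⬝ᵥ w ω) = fun ω => ∑ p, v p * w ω p := by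
      funext ω; simp [dotProduct]
    rw [h1, integral_finset_sum _ fun p _ => (hwi p).const_mul (v p)]
    refine Finset.sum_eq_zero fun p _ => ?_
    rw [integral_const_mul, hmean p, mul_zero]
  set M2 : Matrix (Fin m) (Fin m) ℝ := (Q * B)ᵀ * B with hM2
  have hquadI : Integrable (fun ω => w ω ⬝ᵥ M2.mulVec (w ω)) μ := by
    have h1 : (fun ω => w ω ⬝ᵥ M2.mulVec (w ω))
        = fun ω => ∑ p, ∑ q, M2 p q * (w ω p * w ω q) := by
      funext ω
      rw [sldq_aux_expand M2 (w ω) (w ω)]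
      exact Finset.sum_congr rfl fun p _ => Finset.sum_congr rfl fun q _ => by ring
    rw [h1]
    exact integrable_finset_sum _ fun p _ =>
      integrable_finset_sum _ fun q _ => (hprod p q).const_mul _
  set c : ℝ := ∑ p, ∑ q, M2 p q * Sw p q with hc
  have hquadE : ∫ ω, w ω ⬝ᵥ M2.mulVec (w ω) ∂μ = c := by
    have h1 : (fun ω => w ω ⬝ᵥ M2.mulVec (w ω))
        = fun ω => ∑ p, ∑ q, M2 p q * (w ω p * w ω q) := by
      funext ω
      rw [sldq_aux_expand M2 (w ω) (w ω)]
      exact Finset.sum_congr rfl fun p _ => Finset.sum_congr rfl fun q _ => by ring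
    rw [h1, integral_finset_sum _ (f := fun p ω => ∑ q, M2 p q * (w ω p * w ω q)) fun p _ =>
      integrable_finset_sum _ fun q _ => (hprod p q).const_mul _]
    rw [hc]
    refine Finset.sum_congr rfl fun p _ => ?_
    rw [integral_finset_sum _ fun q _ => (hprod p q).const_mul _]
    refine Finset.sum_congr rfl fun q _ => ?_
    rw [integral_const_mul, hcov p q]
  -- the split of the integrand
  have hsplit : ∀ (x : Fin n → ℝ) (ω : Ω),
      (A.mulVec x + B.mulVec (w ω)) ⬝ᵥ Q.mulVec (A.mulVec x + B.mulVec (w ω))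
        = (A.mulVec x) ⬝ᵥ Q.mulVec (A.mulVec x)
          + ((A.mulVec x) ᵥ* (Q * B)) ⬝ᵥ w ω
          + ((Q.mulVec (A.mulVec x)) ᵥ* B) ⬝ᵥ w ω
          + w ω ⬝ᵥ M2.mulVec (w ω) := by
    intro x ω
    set y := A.mulVec x with hy
    set z := B.mulVec (w ω) with hz
    have e1 : y ⬝ᵥ Q.mulVec z = (y ᵥ* (Q * B)) ⬝ᵥ w ω := by
      rw [hz, Matrix.mulVec_mulVec, Matrix.dotProduct_mulVec]
    have e2 : z ⬝ᵥ Q.mulVec y = ((Q.mulVec y) ᵥ* B) ⬝ᵥ w ω := by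
      rw [dotProduct_comm, hz, Matrix.dotProduct_mulVec]
    have e3 : z ⬝ᵥ Q.mulVec z = w ω ⬝ᵥ M2.mulVec (w ω) := by
      rw [hz, Matrix.mulVec_mulVec, Matrix.dotProduct_mulVec,
        ← Matrix.mulVec_transpose, Matrix.mulVec_mulVec, hM2]
      exact dotProduct_comm _ _
    rw [Matrix.mulVec_add, dotProduct_add, add_dotProduct,
      add_dotProduct, e1, e2, e3]
    ring
  refine ⟨Q, Real.sqrt (max c 0), hposdef, Real.sqrt_nonneg _, fun x hx => ?_⟩
  have hint : ∫ ω, (A.mulVec x + B.mulVec (w ω)) ⬝ᵥ Q.mulVec (A.mulVec x + B.mulVec (w ω)) ∂μ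
      = (A.mulVec x) ⬝ᵥ Q.mulVec (A.mulVec x) + c := by
    have h0 : (fun ω => (A.mulVec x + B.mulVec (w ω)) ⬝ᵥ Q.mulVec (A.mulVec x + B.mulVec (w ω)))
        = fun ω => (A.mulVec x) ⬝ᵥ Q.mulVec (A.mulVec x)
          + ((A.mulVec x) ᵥ* (Q * B)) ⬝ᵥ w ω
          + ((Q.mulVec (A.mulVec x)) ᵥ* B) ⬝ᵥ w ω
          + w ω ⬝ᵥ M2.mulVec (w ω) := funext (hsplit x)
    have hI0 : Integrable (fun _ : Ω => (A.mulVec x) ⬝ᵥ Q.mulVec (A.mulVec x)) μ :=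
      integrable_const _
    have hI1 : Integrable (fun ω =>
        (A.mulVec x) ⬝ᵥ Q.mulVec (A.mulVec x) + ((A.mulVec x) ᵥ* (Q * B)) ⬝ᵥ w ω) μ :=
      hI0.add (hlinI _)
    have hI2 : Integrable (fun ω =>
        (A.mulVec x) ⬝ᵥ Q.mulVec (A.mulVec x) + ((A.mulVec x) ᵥ* (Q * B)) ⬝ᵥ w ω
          + ((Q.mulVec (A.mulVec x)) ᵥ* B) ⬝ᵥ w ω) μ :=
      hI1.add (hlinI _)
    rw [h0, integral_add hI2 hquadI, integral_add hI1 (hlinI _),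
      integral_add hI0 (hlinI _), integral_const, hlin0, hlin0, hquadE]
    simp [measure_univ]
  rw [hint, hLyap x]
  have h8 : max c 0 ≤ x ⬝ᵥ x := by
    by_contra h
    push_neg at h
    exact absurd hx (not_lt.mpr (Real.sqrt_le_sqrt h.le))
  have h9 : c ≤ max c 0 := le_max_left _ _
  linarith
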